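/- Let (z^t) be a nonnegative real sequence satisfying z^{t+1} ≤ (1 - r₁^t) z^t + r₂^t where a₁/(t+1)^{δ₁} ≤ r₁^t ≤ 1 and 0 ≤ r₂^t ≤ a₂/(t+1)^{δ₂}, with a₁, a₂ > 0 and 0 < δ₁ < δ₂, δ₁ < 1. Then z^t = O(1/t^{δ₂ - δ₁}), i.e., there is a constant C such that z^t ≤ C/(t+1)^{δ₂-δ₁} for all t. -/

import Mathlib

open Real

lemma rpow_diff_le_aux (s β : ℝ) (hs : 1 ≤ s) (hβ : 0 < β) :
    1 / s ^ β - 1 / (s + 1) ^ β ≤ β / (s * s ^ β) := by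
  have hs0 : (0:ℝ) < s := by linarith
  have hs1 : (0:ℝ) < s + 1 := by linarith
  have hx : (0:ℝ) < s / (s + 1) := div_pos hs0 hs1
  have hQ : (0:ℝ) < s ^ β := rpow_pos_of_pos hs0 β
  have hS : (0:ℝ) < (s + 1) ^ β := rpow_pos_of_pos hs1 β
  have hlog : -(1/s) ≤ Real.log (s / (s + 1)) := by
    have h := Real.log_le_sub_one_of_pos (show (0:ℝ) < (s/(s+1))⁻¹ by positivity)
    rw [Real.log_inv] at h
    have hinv : (s/(s+1))⁻¹ = (s+1)/s := by
      rw [inv_div]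
    rw [hinv] at h
    have he : (s+1)/s - 1 = 1/s := by field_simp; ring
    rw [he] at h
    linarith
  have hbern : 1 - β / s ≤ (s / (s+1)) ^ β := by
    rw [Real.rpow_def_of_pos hx]
    have h2 := Real.add_one_le_exp (Real.log (s/(s+1)) * β)
    have h3 : -(1/s) * β ≤ Real.log (s/(s+1)) * β :=
      mul_le_mul_of_nonneg_right hlog hβ.le
    have : 1 - β/s = -(1/s)*β + 1 := by ring
    linarith
  rw [Real.div_rpow hs0.le hs1.le] at hbern
  have h4 : (1 - β/s) * ((s+1)^β) ≤ s ^ β := by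
    rw [← le_div_iff₀ hS]; exact hbern
  have h5 : s * (s+1)^β - β * (s+1)^β ≤ s * s^β := by
    have := mul_le_mul_of_nonneg_left h4 hs0.le
    have he : s * ((1 - β/s) * (s+1)^β) = s * (s+1)^β - β * (s+1)^β := by
      field_simp
    linarith [he ▸ this]
  rw [div_sub_div _ _ hQ.ne' hS.ne', div_le_div_iff₀ (by positivity) (by positivity)]
  nlinarith [mul_le_mul_of_nonneg_right h5 hQ.le]

/-- Deterministic recursion lemma, case 1: if `z^{t+1} ≤ (1-r₁^t)z^t + r₂^t` with
`a₁/(t+1)^{δ₁} ≤ r₁^t ≤ 1`, `0 ≤ r₂^t ≤ a₂/(t+1)^{δ₂}`, `0 < δ₁ < δ₂`, `δ₁ < 1`,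
then `z^t = O(1/t^{δ₂-δ₁})`. -/
theorem recursion_rate_case1
    (z r₁ r₂ : ℕ → ℝ) (a₁ a₂ δ₁ δ₂ : ℝ)
    (ha₁ : 0 < a₁) (ha₂ : 0 < a₂)
    (hδ₁ : 0 < δ₁) (hδ₁₂ : δ₁ < δ₂) (hδ₁lt1 : δ₁ < 1)
    (hz_nonneg : ∀ t : ℕ, 0 ≤ z t)
    (hr₁ : ∀ t : ℕ, a₁ / ((t : ℝ) + 1) ^ δ₁ ≤ r₁ t ∧ r₁ t ≤ 1)
    (hr₂ : ∀ t : ℕ, 0 ≤ r₂ t ∧ r₂ t ≤ a₂ / ((t : ℝ) + 1) ^ δ₂)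
    (hrec : ∀ t : ℕ, z (t + 1) ≤ (1 - r₁ t) * z t + r₂ t) :
    ∃ C : ℝ, ∀ t : ℕ, z t ≤ C / ((t : ℝ) + 1) ^ (δ₂ - δ₁) := by
  set β : ℝ := δ₂ - δ₁ with hβdef
  have hβ : 0 < β := by simp only [hβdef]; linarith
  obtain ⟨T, hT⟩ := exists_nat_ge ((2 * β / a₁) ^ (1 - δ₁)⁻¹)
  set C : ℝ := 2 * a₂ / a₁ + ∑ i ∈ Finset.range (T + 1), z i * ((i:ℝ) + 1) ^ β with hC
  have hsum_nonneg : ∀ i ∈ Finset.range (T+1), 0 ≤ z i * ((i:ℝ)+1)^β := fun i _ =>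
    mul_nonneg (hz_nonneg i) (rpow_nonneg (by positivity) β)
  have hsum : 0 ≤ ∑ i ∈ Finset.range (T + 1), z i * ((i:ℝ) + 1) ^ β :=
    Finset.sum_nonneg hsum_nonneg
  have hC0 : 0 < C := by
    have h2 : (0:ℝ) < 2 * a₂ / a₁ := by positivity
    rw [hC]; linarith
  have hCa : a₂ ≤ C * a₁ / 2 := by
    rw [hC, le_div_iff₀ (by norm_num : (0:ℝ) < 2)]
    have : (2 * a₂ / a₁) * a₁ = 2 * a₂ := by field_simp
    nlinarith [mul_le_mul_of_nonneg_right hsum ha₁.le]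
  have hbase : ∀ t, t ≤ T → z t ≤ C / ((t:ℝ)+1)^β := by
    intro t ht
    have hpos : (0:ℝ) < ((t:ℝ)+1)^β := rpow_pos_of_pos (by positivity) β
    rw [le_div_iff₀ hpos]
    have h1 : z t * ((t:ℝ)+1)^β ≤ ∑ i ∈ Finset.range (T+1), z i * ((i:ℝ)+1)^β :=
      Finset.single_le_sum hsum_nonneg (Finset.mem_range.mpr (by omega))
    have h2 : (0:ℝ) ≤ 2 * a₂ / a₁ := by positivity
    rw [hC]; linarith
  have hTT : ∀ t : ℕ, T ≤ t → β ≤ a₁ / 2 * ((t:ℝ)+1) ^ (1 - δ₁) := by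
    intro t ht
    have h1 : ((2*β/a₁ : ℝ)) ^ (1-δ₁)⁻¹ ≤ (t:ℝ)+1 := by
      calc ((2*β/a₁ : ℝ)) ^ (1-δ₁)⁻¹ ≤ (T:ℝ) := hT
      _ ≤ (t:ℝ) := Nat.cast_le.mpr ht
      _ ≤ (t:ℝ)+1 := by linarith
    have h2 : (((2*β/a₁ : ℝ)) ^ (1-δ₁)⁻¹) ^ (1-δ₁) ≤ ((t:ℝ)+1) ^ (1-δ₁) :=
      Real.rpow_le_rpow (by positivity) h1 (by linarith)
    rw [Real.rpow_inv_rpow (by positivity) (by intro h; linarith [h])] at h2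
    rw [div_le_iff₀ ha₁] at h2
    linarith
  refine ⟨C, fun t => ?_⟩
  induction t with
  | zero => exact_mod_cast hbase 0 (Nat.zero_le T)
  | succ u ih =>
    by_cases hu : u + 1 ≤ T
    · exact hbase _ hu
    · have hTu : T ≤ u := by omega
      set s : ℝ := (u:ℝ) + 1 with hsdef
      have hs1 : 1 ≤ s := by rw [hsdef]; have : (0:ℝ) ≤ (u:ℝ) := Nat.cast_nonneg u; linarith
      have hs0 : (0:ℝ) < s := by linarith
      have goal_eq : ((↑(u+1) : ℝ) + 1) = s + 1 := by rw [hsdef]; push_cast; ring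
      rw [goal_eq]
      have hP : (0:ℝ) < s ^ δ₁ := rpow_pos_of_pos hs0 _
      have hQ : (0:ℝ) < s ^ β := rpow_pos_of_pos hs0 _
      have hR : (0:ℝ) < s ^ δ₂ := rpow_pos_of_pos hs0 _
      have hS : (0:ℝ) < (s+1) ^ β := rpow_pos_of_pos (by linarith) _
      have hU : (0:ℝ) < s ^ (1-δ₁) := rpow_pos_of_pos hs0 _
      have hPQ : s ^ δ₁ * s ^ β = s ^ δ₂ := by
        rw [← Real.rpow_add hs0]; congr 1; rw [hβdef]; ring
      have hUP : s ^ (1-δ₁) * s ^ δ₁ = s := by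
        rw [← Real.rpow_add hs0]; norm_num
      have hrle := (hr₁ u).1
      have hrle1 := (hr₁ u).2
      have hr2 := (hr₂ u).2
      have hmul : (1 - r₁ u) * z u ≤ (1 - a₁ / s ^ δ₁) * (C / s ^ β) :=
        mul_le_mul (by linarith) ih (hz_nonneg u) (by linarith)
      have hkey := rpow_diff_le_aux s β hs1 hβ
      have hTb := hTT u hTu
      -- e1: expand product
      have e1 : (1 - a₁ / s ^ δ₁) * (C / s ^ β) = C / s ^ β - a₁ * C / s ^ δ₂ := by
        rw [← hPQ]; field_simp
      -- i1: C/s^β - C/(s+1)^β ≤ C*β/(s*s^β)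
      have i1 : C / s ^ β - C / (s+1) ^ β ≤ C * (β / (s * s ^ β)) := by
        have h := mul_le_mul_of_nonneg_left hkey hC0.le
        have he : C * (1 / s ^ β - 1 / (s+1) ^ β) = C / s ^ β - C / (s+1) ^ β := by
          ring
        linarith [he ▸ h]
      -- i2: C * (β/(s*s^β)) ≤ C * a₁/2 / s^δ₂
      have i2 : C * (β / (s * s ^ β)) ≤ C * (a₁/2) / s ^ δ₂ := by
        have hnum : β / (s * s ^ β) ≤ (a₁/2) / s ^ δ₂ := by
          have e2 : s * s ^ β = s ^ (1-δ₁) * s ^ δ₂ := by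
            have h1 : s * s ^ β = s ^ (1 + β) := by
              rw [Real.rpow_add hs0, Real.rpow_one]
            rw [h1, ← Real.rpow_add hs0]; congr 1; rw [hβdef]; ring
          have hTb' : β ≤ a₁/2 * s ^ (1-δ₁) := by rw [hsdef]; exact hTb
          have h3 : β / (s * s ^ β) ≤ (a₁/2 * s ^ (1-δ₁)) / (s * s ^ β) := by
            gcongr
          have e3 : (a₁/2 * s ^ (1-δ₁)) / (s * s ^ β) = (a₁/2) / s ^ δ₂ := by
            rw [e2]; rw [mul_comm (a₁/2) _, mul_div_mul_left _ _ hU.ne']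
          linarith [e3 ▸ h3]
        calc C * (β / (s * s ^ β)) ≤ C * ((a₁/2) / s ^ δ₂) :=
              mul_le_mul_of_nonneg_left hnum hC0.le
        _ = C * (a₁/2) / s ^ δ₂ := by ring
      -- i3
      have i3 : a₂ / s ^ δ₂ ≤ (C * a₁ / 2) / s ^ δ₂ := by gcongr
      have hr2' : r₂ u ≤ a₂ / s ^ δ₂ := hr2
      have hrecu : z (u+1) ≤ (1 - r₁ u) * z u + r₂ u := hrec u
      have final : (1 - a₁ / s ^ δ₁) * (C / s ^ β) + a₂ / s ^ δ₂ ≤ C / (s+1) ^ β := by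
        rw [e1]
        have e4 : C * (a₁/2) / s ^ δ₂ + (C * a₁ / 2) / s ^ δ₂ = a₁ * C / s ^ δ₂ := by
          ring
        linarith
      linarith
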